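/- Assume n ≥ 1 and let D : A → A be a k-linear map satisfying the graded Leibniz rule with D(x_i) = x_1 * x_i for all i ∈ Fin n. Then for every m ≥ 1 and every f ∈ A homogeneous of degree 2m, there exists a unique polynomial h, homogeneous of degree 2m and supported on the variables x_2,…,x_n (i.e. h ∈ MvPolynomial.supported k {i : Fin n | i ≠ 0}), such that f − h = D g for some g ∈ A homogeneous of degree 2m−1. In other words, the degree-2m cohomology of A(1,0,…,0) is represented bijectively by the degree-2m homogeneous polynomials in x_2,…,x_n. -/

import Mathlib

open MvPolynomial

section Aux

variable {k : Type*} [Field k] [CharZero k] {n : ℕ}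

lemma aux_D_one (D : MvPolynomial (Fin n) k →ₗ[k] MvPolynomial (Fin n) k)
    (hLeib : ∀ (d : ℕ) (a b : MvPolynomial (Fin n) k), a.IsHomogeneous d →
      D (a * b) = D a * b + ((-1 : k) ^ d) • (a * D b)) : D 1 = 0 := by
  have := hLeib 0 1 1 (isHomogeneous_one _ _)
  simpa using this

lemma aux_D_monomial (hn : 1 ≤ n)
    (D : MvPolynomial (Fin n) k →ₗ[k] MvPolynomial (Fin n) k)
    (hLeib : ∀ (d : ℕ) (a b : MvPolynomial (Fin n) k), a.IsHomogeneous d →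
      D (a * b) = D a * b + ((-1 : k) ^ d) • (a * D b))
    (hD : ∀ i : Fin n, D (X i) = X ⟨0, hn⟩ * X i) :
    ∀ (d : ℕ) (s : Fin n →₀ ℕ) (c : k), s.degree = d →
      D (monomial s c) = if Odd d then X ⟨0, hn⟩ * monomial s c else 0 := by
  intro d
  induction d with
  | zero =>
    intro s c hs
    rw [Finsupp.degree_eq_zero_iff] at hs
    subst hs
    have : (monomial (0 : Fin n →₀ ℕ) c) = c • (1 : MvPolynomial (Fin n) k) := by
      simp [monomial_zero', smul_eq_C_mul]
    rw [this, map_smul, aux_D_one D hLeib]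
    simp
  | succ d ih =>
    intro s c hs
    have hs0 : s ≠ 0 := by
      intro h; rw [h] at hs; simp at hs
    obtain ⟨i, hi⟩ : ∃ i, s i ≠ 0 := by
      by_contra h; push_neg at h; exact hs0 (Finsupp.ext h)
    set s' := s - Finsupp.single i 1 with hs'
    have hsplit : s = Finsupp.single i 1 + s' := by
      ext j
      simp only [Finsupp.coe_add, Pi.add_apply, hs', Finsupp.coe_tsub, Pi.sub_apply]
      rcases eq_or_ne j i with rfl | hj
      · simp; omega
      · simp [Finsupp.single_apply, Ne.symm hj]
    have hdeg' : s'.degree = d := by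
      have : (Finsupp.single i 1 + s').degree = d + 1 := by rw [← hsplit]; exact hs
      rw [Finsupp.degree_eq_weight_one, map_add] at this
      rw [Finsupp.degree_eq_weight_one]
      have h1 : (Finsupp.weight (fun _ : Fin n => (1:ℕ))) (Finsupp.single i (1:ℕ)) = 1 := by
        simp [Finsupp.weight_apply, Finsupp.sum_single_index]
      omega
    have hmono : monomial s c = X i * monomial s' c := by
      rw [hsplit, monomial_single_add, pow_one]
    rw [hmono, hLeib 1 (X i) (monomial s' c) (isHomogeneous_X _ _), hD i,
      ih s' c hdeg']
    rcases Nat.even_or_odd d with he | ho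
    · have h1 : ¬ Odd d := by simp [Nat.not_odd_iff_even, he]
      have h2 : Odd (d + 1) := Even.add_one he
      simp only [if_neg h1, if_pos h2, mul_zero, smul_zero, add_zero]
      ring
    · have h1 : Odd d := ho
      have h2 : ¬ Odd (d + 1) := by simp [Nat.not_odd_iff_even]; exact Odd.add_one ho
      simp only [if_pos h1, if_neg h2, pow_one]
      rw [neg_one_smul]
      ring

lemma aux_D_homog (hn : 1 ≤ n)
    (D : MvPolynomial (Fin n) k →ₗ[k] MvPolynomial (Fin n) k)
    (hLeib : ∀ (d : ℕ) (a b : MvPolynomial (Fin n) k), a.IsHomogeneous d →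
      D (a * b) = D a * b + ((-1 : k) ^ d) • (a * D b))
    (hD : ∀ i : Fin n, D (X i) = X ⟨0, hn⟩ * X i)
    (d : ℕ) (f : MvPolynomial (Fin n) k) (hf : f.IsHomogeneous d) :
    D f = if Odd d then X ⟨0, hn⟩ * f else 0 := by
  classical
  conv_lhs => rw [← support_sum_monomial_coeff f]
  rw [map_sum]
  have hterm : ∀ s ∈ f.support,
      D (monomial s (coeff s f)) = if Odd d then X ⟨0, hn⟩ * monomial s (coeff s f) else 0 := by
    intro s hs
    apply aux_D_monomial hn D hLeib hD
    rw [Finsupp.degree_eq_weight_one]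
    exact hf (mem_support_iff.mp hs)
  rw [Finset.sum_congr rfl hterm]
  split
  · rw [← Finset.mul_sum, support_sum_monomial_coeff]
  · simp

lemma aux_phi_fix (hn : 1 ≤ n) (p : MvPolynomial (Fin n) k)
    (hp : p ∈ MvPolynomial.supported k {i : Fin n | i ≠ ⟨0, hn⟩}) :
    aeval (fun j : Fin n => if j = ⟨0, hn⟩ then 0 else X j) p = p := by
  rw [MvPolynomial.supported] at hp
  induction hp using Algebra.adjoin_induction with
  | mem x hx =>
    obtain ⟨j, hj, rfl⟩ := hx
    rw [aeval_X, if_neg hj]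
  | algebraMap r => simp [algebraMap_eq]
  | add x y _ _ hx hy => rw [map_add, hx, hy]
  | mul x y _ _ hx hy => rw [map_mul, hx, hy]

end Aux

/-- For the DG polynomial algebra `A(1,0,…,0)`, `m ≥ 1` and `f` homogeneous of
degree `2m`, there is a unique polynomial `h`, homogeneous of degree `2m` and supported on
the variables `x_2,…,x_n`, such that `f - h = D g` for some `g` homogeneous of degree
`2m - 1`. -/
theorem stmt_9 (k : Type*) [Field k] [CharZero k] (n : ℕ) (hn : 1 ≤ n)
    (D : MvPolynomial (Fin n) k →ₗ[k] MvPolynomial (Fin n) k)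
    (hLeib : ∀ (d : ℕ) (a b : MvPolynomial (Fin n) k), a.IsHomogeneous d →
      D (a * b) = D a * b + ((-1 : k) ^ d) • (a * D b))
    (hD : ∀ i : Fin n, D (X i) = X ⟨0, hn⟩ * X i) :
    ∀ m : ℕ, 1 ≤ m → ∀ f : MvPolynomial (Fin n) k, f.IsHomogeneous (2 * m) →
      ∃! h : MvPolynomial (Fin n) k,
        (h.IsHomogeneous (2 * m) ∧ h ∈ MvPolynomial.supported k {i : Fin n | i ≠ ⟨0, hn⟩}) ∧
        ∃ g : MvPolynomial (Fin n) k, g.IsHomogeneous (2 * m - 1) ∧ f - h = D g := by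
  classical
  intro m hm f hf
  set i0 : Fin n := ⟨0, hn⟩ with hi0
  have hodd : Odd (2 * m - 1) := ⟨m - 1, by omega⟩
  have hdeg : ∀ s ∈ f.support, s.degree = 2 * m := by
    intro s hs
    rw [Finsupp.degree_eq_weight_one]
    exact hf (mem_support_iff.mp hs)
  set h : MvPolynomial (Fin n) k :=
    ∑ s ∈ f.support.filter (fun s => s i0 = 0), monomial s (coeff s f) with hh
  set q : MvPolynomial (Fin n) k :=
    ∑ s ∈ f.support.filter (fun s => s i0 ≠ 0),
      monomial (s - Finsupp.single i0 1) (coeff s f) with hq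
  -- splitting lemma for s with s i0 ≠ 0
  have hsplit : ∀ s : Fin n →₀ ℕ, s i0 ≠ 0 →
      s = Finsupp.single i0 1 + (s - Finsupp.single i0 1) := by
    intro s hs
    ext j
    simp only [Finsupp.coe_add, Pi.add_apply, Finsupp.coe_tsub, Pi.sub_apply]
    rcases eq_or_ne j i0 with rfl | hj
    · simp; omega
    · simp [Finsupp.single_apply, Ne.symm hj]
  have hdeg' : ∀ s ∈ f.support.filter (fun s => s i0 ≠ 0),
      (s - Finsupp.single i0 1).degree = 2 * m - 1 := by
    intro s hs
    rw [Finset.mem_filter] at hs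
    have h1 : s.degree = 2 * m := hdeg s hs.1
    have h2 : (Finsupp.single i0 1 + (s - Finsupp.single i0 1)).degree = 2 * m := by
      rw [← hsplit s hs.2]; exact h1
    rw [Finsupp.degree_eq_weight_one, map_add] at h2
    rw [Finsupp.degree_eq_weight_one]
    have h3 : (Finsupp.weight (fun _ : Fin n => (1:ℕ))) (Finsupp.single i0 (1:ℕ)) = 1 := by
      simp [Finsupp.weight_apply, Finsupp.sum_single_index]
    omega
  have hhhom : h.IsHomogeneous (2 * m) := by
    apply IsHomogeneous.sum
    intro s hs
    exact isHomogeneous_monomial _ (hdeg s (Finset.mem_filter.mp hs).1)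
  have hhsupp : h ∈ MvPolynomial.supported k {i : Fin n | i ≠ i0} := by
    apply Subalgebra.sum_mem
    intro s hs
    rw [Finset.mem_filter] at hs
    rw [mem_supported, vars_monomial (mem_support_iff.mp hs.1)]
    intro j hj
    have : s j ≠ 0 := Finsupp.mem_support_iff.mp hj
    intro hji
    exact this (hji ▸ hs.2)
  have hqhom : q.IsHomogeneous (2 * m - 1) := by
    apply IsHomogeneous.sum
    intro s hs
    exact isHomogeneous_monomial _ (hdeg' s hs)
  have hfh : f - h = X i0 * q := by
    conv_lhs => rw [← support_sum_monomial_coeff f,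
      ← Finset.sum_filter_add_sum_filter_not f.support (fun s => s i0 = 0)]
    rw [hh, add_sub_cancel_left, hq, Finset.mul_sum]
    apply Finset.sum_congr rfl
    intro s hs
    rw [Finset.mem_filter] at hs
    rw [← pow_one (X i0 : MvPolynomial (Fin n) k), ← monomial_single_add,
      ← hsplit s hs.2]
  -- D on homogeneous odd-degree polys
  have hDodd : ∀ g : MvPolynomial (Fin n) k, g.IsHomogeneous (2 * m - 1) →
      D g = X i0 * g := by
    intro g hg
    rw [aux_D_homog hn D hLeib hD _ g hg, if_pos hodd]
  refine ⟨h, ⟨⟨hhhom, hhsupp⟩, q, hqhom, by rw [hfh, hDodd q hqhom]⟩, ?_⟩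
  rintro h' ⟨⟨hh'hom, hh'supp⟩, g', hg'hom, hfg'⟩
  -- h' - h = X i0 * (q - g')
  have key : h' - h = X i0 * (q - g') := by
    have h1 : f - h' = X i0 * g' := by rw [hfg', hDodd g' hg'hom]
    have h2 : f - h = X i0 * q := hfh
    rw [mul_sub, ← h1, ← h2]; ring
  have hsub : h' - h ∈ MvPolynomial.supported k {i : Fin n | i ≠ i0} :=
    Subalgebra.sub_mem _ hh'supp hhsupp
  have hz : h' - h = 0 := by
    have := aux_phi_fix hn (h' - h) hsub
    rw [← this]
    conv_lhs => rw [key]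
    rw [map_mul, aeval_X, if_pos rfl, zero_mul]
  exact sub_eq_zero.mp hz
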